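/- Let k ≥ 4 be even. In the formal double zeta space DZ_k of level 2 (generated by symbols Z^{eo}_{r,s}, Z^{oe}_{r,s}, Z^{oo}_{r,s} for r+s=k, r,s≥1, and Z^{o}_k, subject to the double shuffle relations of level 2), the sum formula holds: Σ_{r=2, r even}^{k−2} Z^{oo}_{r,k−r} = (1/4) Z^{o}_k. -/

import Mathlib

open Finset

-- helpers

private lemma reflect_sum (k : ℕ) (f : ℕ → ℚ) :
    ∑ r ∈ Icc 1 (k-1), f (k - r) = ∑ r ∈ Icc 1 (k-1), f r := by
  refine Finset.sum_nbij' (fun r => k - r) (fun r => k - r) ?_ ?_ ?_ ?_ ?_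
  · intro a ha; simp only [mem_Icc] at *; omega
  · intro a ha; simp only [mem_Icc] at *; omega
  · intro a ha; simp only [mem_Icc] at *; omega
  · intro a ha; simp only [mem_Icc] at *; omega
  · intro a ha; rfl

private lemma choose_sum_range (n N : ℕ) (h : n < N) :
    ∑ j ∈ range N, (n.choose j : ℚ) = 2 ^ n := by
  rw [← Finset.sum_range_add_sum_Ico _ (Nat.succ_le_of_lt h)]
  rw [Finset.sum_Ico_eq_sum_range]
  have hz : ∑ j ∈ range (N - (n+1)), ((n.choose (n+1+j) : ℚ)) = 0 := by
    apply Finset.sum_eq_zero; intro j _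
    rw [Nat.choose_eq_zero_of_lt (by omega)]; simp
  rw [hz, add_zero, ← Nat.cast_sum, Nat.sum_range_choose]
  push_cast; ring

private lemma choose_alt_range (n N : ℕ) (h : n < N) :
    ∑ j ∈ range N, (-1:ℚ)^j * n.choose j = if n = 0 then 1 else 0 := by
  rw [← Finset.sum_range_add_sum_Ico _ (Nat.succ_le_of_lt h)]
  have h2 : ∑ j ∈ Ico (n+1) N, (-1:ℚ)^j * n.choose j = 0 := by
    apply Finset.sum_eq_zero; intro j hj
    rw [mem_Ico] at hj
    rw [Nat.choose_eq_zero_of_lt (by omega)]; simp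
  rw [h2, add_zero]
  have h3 := Int.alternating_sum_range_choose (n := n)
  have h4 := congrArg (fun z : ℤ => (z : ℚ)) h3
  push_cast at h4
  rw [h4]

private lemma choose_odd_range (n N : ℕ) (h : n < N) :
    ∑ j ∈ range N, (if Odd j then (n.choose j : ℚ) else 0)
      = (2^n - if n = 0 then 1 else 0) / 2 := by
  have key : ∀ j : ℕ, (if Odd j then (n.choose j : ℚ) else 0)
      = ((n.choose j : ℚ) - (-1:ℚ)^j * n.choose j) / 2 := by
    intro j
    rcases Nat.even_or_odd j with he | ho
    · rw [if_neg (by simpa [Nat.even_iff, Nat.odd_iff] using he), he.neg_one_pow]; ring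
    · rw [if_pos ho, ho.neg_one_pow]; ring
  simp_rw [key]
  rw [← Finset.sum_div, Finset.sum_sub_distrib, choose_sum_range n N h, choose_alt_range n N h]

private lemma count_odd_range (N : ℕ) : ∑ j ∈ range N, (if Odd j then (1:ℚ) else 0)
    = ((N:ℚ) - if Even N then 0 else 1) / 2 := by
  have key : ∀ j : ℕ, (if Odd j then (1:ℚ) else 0) = (1 - (-1:ℚ)^j) / 2 := by
    intro j
    rcases Nat.even_or_odd j with he | ho
    · rw [if_neg (by simpa [Nat.even_iff, Nat.odd_iff] using he), he.neg_one_pow]; ring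
    · rw [if_pos ho, ho.neg_one_pow]; ring
  simp_rw [key]
  rw [← Finset.sum_div, Finset.sum_sub_distrib, neg_one_geom_sum]
  simp

private lemma icc_to_range (f : ℕ → ℚ) (k : ℕ) :
    ∑ r ∈ Icc 1 (k-1), f r = ∑ j ∈ range (k-1), f (j+1) := by
  rw [← Finset.Ico_add_one_right_eq_Icc, Finset.sum_Ico_eq_sum_range, Nat.add_sub_cancel]
  exact Finset.sum_congr rfl (fun j _ => by rw [Nat.add_comm])





/-- Sum formula in the formal double zeta space of level 2: any assignment of rationals
to the symbols satisfying the level-2 double shuffle relations satisfies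
Σ_{r even, 2 ≤ r ≤ k−2} Z^{oo}_{r,k−r} = (1/4) Z^{o}_k. -/
theorem sum_formula_level_two (k : ℕ) (hk : 4 ≤ k) (hke : Even k)
    (Zeo Zoe Zoo : ℕ → ℕ → ℚ) (Zo : ℚ)
    (hds1 : ∀ r s : ℕ, 1 ≤ r → 1 ≤ s → r + s = k →
      Zoe r s + Zeo s r =
        ∑ i ∈ Finset.Icc 1 (k - 1),
          (((i - 1).choose (r - 1) : ℚ) * Zoe i (k - i) +
            ((i - 1).choose (s - 1) : ℚ) * Zoo i (k - i)))
    (hds2 : ∀ r s : ℕ, 1 ≤ r → 1 ≤ s → r + s = k →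
      Zoo r s + Zoo s r + Zo =
        ∑ i ∈ Finset.Icc 1 (k - 1),
          (((i - 1).choose (r - 1) : ℚ) + ((i - 1).choose (s - 1) : ℚ)) * Zeo i (k - i)) :
    ∑ r ∈ Finset.Icc 2 (k - 2), (if Even r then Zoo r (k - r) else 0) = (1 / 4) * Zo := by
  have hkm : k % 2 = 0 := Nat.even_iff.mp hke
  -- Step 1 : Zeo 1 (k-1) = ∑ Zoo
  have e1 := hds1 (k-1) 1 (by omega) le_rfl (by omega)
  have hsplit : (∑ i ∈ Icc 1 (k-1), (((i-1).choose (k-1-1) : ℚ) * Zoe i (k-i) +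
          ((i-1).choose (1-1) : ℚ) * Zoo i (k-i)))
      = Zoe (k-1) 1 + ∑ i ∈ Icc 1 (k-1), Zoo i (k-i) := by
    rw [Finset.sum_add_distrib]
    congr 1
    · rw [Finset.sum_eq_single (k-1)]
      · rw [Nat.choose_self]
        have h' : k - (k-1) = 1 := by omega
        rw [h']; ring
      · intro i hi hne; rw [mem_Icc] at hi
        rw [Nat.choose_eq_zero_of_lt (by omega)]; simp
      · intro h; exact absurd (by rw [mem_Icc]; omega) h
    · exact Finset.sum_congr rfl (fun i _ => by norm_num)
  have h1 : Zeo 1 (k-1) = ∑ i ∈ Icc 1 (k-1), Zoo i (k-i) := by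
    rw [hsplit] at e1; linarith
  -- binomial row sums
  have hbin1 : ∀ i ∈ Icc 1 (k-1), ∑ r ∈ Icc 1 (k-1), ((i-1).choose (r-1) : ℚ) = 2^(i-1) := by
    intro i hi; rw [mem_Icc] at hi
    rw [icc_to_range (fun r => ((i-1).choose (r-1) : ℚ)) k]
    simp only [Nat.add_sub_cancel]
    exact choose_sum_range _ _ (by omega)
  have hbin2 : ∀ i ∈ Icc 1 (k-1), ∑ r ∈ Icc 1 (k-1), ((i-1).choose (k-r-1) : ℚ) = 2^(i-1) := by
    intro i hi
    exact (reflect_sum k (fun r => ((i-1).choose (r-1) : ℚ))).trans (hbin1 i hi)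
  have hbin3 : ∀ i ∈ Icc 1 (k-1),
      ∑ r ∈ Icc 1 (k-1), (if Even r then ((i-1).choose (r-1) : ℚ) else 0)
        = (2^(i-1) - if i = 1 then 1 else 0) / 2 := by
    intro i hi; rw [mem_Icc] at hi
    rw [icc_to_range (fun r => if Even r then ((i-1).choose (r-1) : ℚ) else 0) k]
    have hpar : ∀ j : ℕ, (if Even (j+1) then ((i-1).choose (j+1-1) : ℚ) else 0)
        = (if Odd j then ((i-1).choose j : ℚ) else 0) := by
      intro j
      have : Even (j+1) ↔ Odd j := by
        simp [Nat.even_iff, Nat.odd_iff, Nat.add_mod]; omega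
      simp only [Nat.add_sub_cancel, this]
    simp only [hpar]
    rw [choose_odd_range _ _ (by omega)]
    have hii : i - 1 = 0 ↔ i = 1 := by omega
    simp only [hii]
  have hbin4 : ∀ i ∈ Icc 1 (k-1),
      ∑ r ∈ Icc 1 (k-1), (if Even r then ((i-1).choose (k-r-1) : ℚ) else 0)
        = (2^(i-1) - if i = 1 then 1 else 0) / 2 := by
    intro i hi
    have hcongr : ∑ r ∈ Icc 1 (k-1), (if Even r then ((i-1).choose (k-r-1) : ℚ) else 0)
        = ∑ r ∈ Icc 1 (k-1), (fun t => if Even t then ((i-1).choose (t-1) : ℚ) else 0) (k - r) := by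
      refine Finset.sum_congr rfl (fun r hr => ?_)
      rw [mem_Icc] at hr
      have : Even (k - r) ↔ Even r := by
        simp only [Nat.even_iff]; omega
      simp only [this]
    rw [hcongr]
    exact (reflect_sum k (fun t => if Even t then ((i-1).choose (t-1) : ℚ) else 0)).trans (hbin3 i hi)
  -- step 2 : sum of all hds2
  have e2 : ∀ r ∈ Icc 1 (k-1), Zoo r (k-r) + Zoo (k-r) r + Zo
      = ∑ i ∈ Icc 1 (k-1), (((i-1).choose (r-1) : ℚ) + ((i-1).choose (k-r-1) : ℚ)) * Zeo i (k-i) := by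
    intro r hr; rw [mem_Icc] at hr
    exact hds2 r (k-r) (by omega) (by omega) (by omega)
  have hreflZoo : ∑ r ∈ Icc 1 (k-1), Zoo (k-r) r = ∑ r ∈ Icc 1 (k-1), Zoo r (k-r) := by
    have : ∑ r ∈ Icc 1 (k-1), Zoo (k-r) r
        = ∑ r ∈ Icc 1 (k-1), (fun t => Zoo t (k - t)) (k - r) := by
      refine Finset.sum_congr rfl (fun r hr => ?_)
      rw [mem_Icc] at hr
      simp only
      congr 1
      omega
    rw [this]
    exact reflect_sum k (fun t => Zoo t (k - t))
  have H2 : 2 * (∑ r ∈ Icc 1 (k-1), Zoo r (k-r)) + ((k:ℚ)-1) * Zo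
      = 2 * ∑ i ∈ Icc 1 (k-1), (2:ℚ)^(i-1) * Zeo i (k-i) := by
    have hs := Finset.sum_congr rfl e2
    rw [Finset.sum_add_distrib, Finset.sum_add_distrib, hreflZoo, Finset.sum_const,
      Nat.card_Icc, Finset.sum_comm] at hs
    have hrhs : ∀ i ∈ Icc 1 (k-1),
        ∑ r ∈ Icc 1 (k-1), (((i-1).choose (r-1) : ℚ) + ((i-1).choose (k-r-1) : ℚ)) * Zeo i (k-i)
          = 2 * ((2:ℚ)^(i-1) * Zeo i (k-i)) := by
      intro i hi
      rw [← Finset.sum_mul, Finset.sum_add_distrib, hbin1 i hi, hbin2 i hi]; ring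
    rw [Finset.sum_congr rfl hrhs, ← Finset.mul_sum] at hs
    have hcard : ((k - 1 + 1 - 1 : ℕ) : ℚ) = (k:ℚ) - 1 := by
      have h' : k - 1 + 1 - 1 = k - 1 := by omega
      rw [h', Nat.cast_sub (by omega), Nat.cast_one]
    rw [nsmul_eq_mul, hcard] at hs
    linarith
  -- step 3 : sum of hds2 over even r
  have e3 : ∀ r ∈ Icc 1 (k-1),
      (if Even r then Zoo r (k-r) else 0) + (if Even r then Zoo (k-r) r else 0)
        + (if Even r then Zo else 0)
      = ∑ i ∈ Icc 1 (k-1),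
          ((if Even r then ((i-1).choose (r-1) : ℚ) else 0)
            + (if Even r then ((i-1).choose (k-r-1) : ℚ) else 0)) * Zeo i (k-i) := by
    intro r hr
    by_cases h : Even r
    · simp only [if_pos h]; exact e2 r hr
    · simp only [if_neg h]
      rw [Finset.sum_eq_zero (fun i _ => by norm_num)]
      norm_num
  have hreflZooE : ∑ r ∈ Icc 1 (k-1), (if Even r then Zoo (k-r) r else 0)
      = ∑ r ∈ Icc 1 (k-1), (if Even r then Zoo r (k-r) else 0) := by
    have hc : ∑ r ∈ Icc 1 (k-1), (if Even r then Zoo (k-r) r else 0)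
        = ∑ r ∈ Icc 1 (k-1), (fun t => if Even t then Zoo t (k-t) else 0) (k - r) := by
      refine Finset.sum_congr rfl (fun r hr => ?_)
      rw [mem_Icc] at hr
      simp only
      have h1' : Even (k - r) ↔ Even r := by simp only [Nat.even_iff]; omega
      have h2' : k - (k - r) = r := by omega
      rw [h2']
      simp only [h1']
    rw [hc]
    exact reflect_sum k (fun t => if Even t then Zoo t (k-t) else 0)
  have hZoCount : ∑ r ∈ Icc 1 (k-1), (if Even r then Zo else 0) = (((k:ℚ)-2)/2) * Zo := by
    have hone : ∀ r : ℕ, (if Even r then Zo else 0) = (if Even r then (1:ℚ) else 0) * Zo :=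
      fun r => by split <;> ring
    simp only [hone]
    rw [← Finset.sum_mul]
    congr 1
    rw [icc_to_range (fun r => if Even r then (1:ℚ) else 0) k]
    have hpar : ∀ j : ℕ, (if Even (j+1) then (1:ℚ) else 0) = (if Odd j then (1:ℚ) else 0) := by
      intro j
      have : Even (j+1) ↔ Odd j := by simp [Nat.even_iff, Nat.odd_iff, Nat.add_mod]; omega
      simp only [this]
    simp only [hpar]
    rw [count_odd_range]
    have hne : ¬ Even (k-1) := by simp only [Nat.even_iff]; omega
    rw [if_neg hne, Nat.cast_sub (by omega : 1 ≤ k), Nat.cast_one]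
    ring
  have hrhs3 : ∀ i ∈ Icc 1 (k-1),
      ∑ r ∈ Icc 1 (k-1),
          ((if Even r then ((i-1).choose (r-1) : ℚ) else 0)
            + (if Even r then ((i-1).choose (k-r-1) : ℚ) else 0)) * Zeo i (k-i)
        = ((2:ℚ)^(i-1) - if i = 1 then 1 else 0) * Zeo i (k-i) := by
    intro i hi
    rw [← Finset.sum_mul, Finset.sum_add_distrib, hbin3 i hi, hbin4 i hi]
    ring
  have hsplit3 : ∑ i ∈ Icc 1 (k-1), ((2:ℚ)^(i-1) - if i = 1 then 1 else 0) * Zeo i (k-i)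
      = (∑ i ∈ Icc 1 (k-1), (2:ℚ)^(i-1) * Zeo i (k-i)) - Zeo 1 (k-1) := by
    have hexp : ∀ i ∈ Icc 1 (k-1), ((2:ℚ)^(i-1) - if i = 1 then 1 else 0) * Zeo i (k-i)
        = (2:ℚ)^(i-1) * Zeo i (k-i) - (if i = 1 then 1 else 0) * Zeo i (k-i) :=
      fun i _ => by ring
    rw [Finset.sum_congr rfl hexp, Finset.sum_sub_distrib]
    congr 1
    rw [Finset.sum_eq_single 1]
    · norm_num
    · intro i hi hne; rw [if_neg hne, zero_mul]
    · intro h; exact absurd (by rw [mem_Icc]; omega) h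
  have H3 : 2 * (∑ r ∈ Icc 1 (k-1), (if Even r then Zoo r (k-r) else 0))
      + (((k:ℚ)-2)/2) * Zo
      = (∑ i ∈ Icc 1 (k-1), (2:ℚ)^(i-1) * Zeo i (k-i)) - Zeo 1 (k-1) := by
    have hs3 := Finset.sum_congr rfl e3
    rw [Finset.sum_add_distrib, Finset.sum_add_distrib, hreflZooE, hZoCount,
      Finset.sum_comm] at hs3
    rw [Finset.sum_congr rfl hrhs3, hsplit3] at hs3
    linarith
  -- finale
  have hT : ∑ r ∈ Icc 1 (k-1), (if Even r then Zoo r (k-r) else 0)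
      = ∑ r ∈ Icc 2 (k-2), (if Even r then Zoo r (k-r) else 0) := by
    have hset : Icc 1 (k-1) = insert 1 (insert (k-1) (Icc 2 (k-2))) := by
      ext x; simp only [mem_Icc, mem_insert]; omega
    rw [hset, Finset.sum_insert (by simp only [mem_insert, mem_Icc]; omega),
      Finset.sum_insert (by simp only [mem_Icc]; omega)]
    have hno1 : ¬ Even 1 := Nat.not_even_one
    have hnok : ¬ Even (k-1) := by simp only [Nat.even_iff]; omega
    rw [if_neg hno1, if_neg hnok, zero_add, zero_add]
  rw [← hT]
  linear_combination (1/2) * H3 - (1/4) * H2 - (1/2) * h1
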